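/- Let Γ be a finitely generated blueprint and A a finite alphabet. A subset X of A[Γ] (the full Γ-shift) is a Γ-subshift, i.e., equals X[Γ, ℱ] for some set of forbidden patterns ℱ, if and only if X is closed in the prodiscrete topology and invariant under the partial action of S*, meaning (φ, x)·w ∈ X for all (φ, x) ∈ X and w ∈ supp(φ), where ((φ, x)·w)(u) = (φ(wu), x(wu)). -/

import Mathlib

/-- A blueprint: states `M`, generators `S`, initial and terminal maps, and relations. -/
structure Blueprint (M S : Type*) where
  init : S → M
  term : S → Set M
  term_nonempty : ∀ s : S, (term s).Nonempty
  rel : Set (List S × List S)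

namespace Blueprint

variable {M S : Type*}

/-- A map `φ : S* → M ∪ {∅}` is `Γ`-consistent. -/
def Consistent (Γ : Blueprint M S) (φ : List S → Option M) : Prop :=
  φ [] ≠ none ∧ ∀ (w : List S) (s : S),
    (φ w = some (Γ.init s) → ∃ m ∈ Γ.term s, φ (w ++ [s]) = some m) ∧
    (φ w ≠ some (Γ.init s) → φ (w ++ [s]) = none)

/-- Two words are `Γ`-similar if they differ by replacing a relator. -/
def Similar (Γ : Blueprint M S) (u v : List S) : Prop :=
  ∃ x y w w', (w, w') ∈ Γ.rel ∧ u = x ++ w ++ y ∧ v = x ++ w' ++ y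

/-- `Γ`-equivalence: the equivalence relation generated by `Γ`-similarity. -/
def Equiv (Γ : Blueprint M S) : List S → List S → Prop :=
  Relation.EqvGen Γ.Similar

/-- A `Γ`-model: a `Γ`-consistent map constant on `Γ`-equivalence classes within its support. -/
def IsModel (Γ : Blueprint M S) (φ : List S → Option M) : Prop :=
  Γ.Consistent φ ∧
    ∀ u v : List S, Γ.Equiv u v → φ u ≠ none → φ v ≠ none → φ u = φ v

end Blueprint

instance (priority := low) optionDiscrete {α : Type*} : TopologicalSpace (Option α) := ⊥

/-- A configuration `c ∈ ((M × A) ∪ {∅})^{S*}` belongs to the full `Γ`-shift `A[Γ]`: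
its state part is a `Γ`-model and its alphabet part is constant on `Γ`-equivalence
classes within the support. -/
def Blueprint.InFullShift {M S A : Type*} (Γ : Blueprint M S)
    (c : List S → Option (M × A)) : Prop :=
  Γ.IsModel (fun w => (c w).map Prod.fst) ∧
    ∀ u v : List S, Γ.Equiv u v → c u ≠ none → c v ≠ none →
      (c u).map Prod.snd = (c v).map Prod.snd

/-- `c` avoids all forbidden patterns of `F` at every point of its support. -/
def AvoidsPatterns {M S A : Type*} (F : Set (List S → Option (M × A)))
    (c : List S → Option (M × A)) : Prop :=
  ∀ p ∈ F, ∀ w : List S, c w ≠ none →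
    ∃ u : List S, p u ≠ none ∧ c (w ++ u) ≠ p u

-- AUX
section Aux
variable {M S A : Type*}

instance optionDiscrete' {α : Type*} : DiscreteTopology (Option α) := ⟨rfl⟩

lemma closed_pair {β ι : Type*} [TopologicalSpace β] [DiscreteTopology β]
    (P : β → β → Prop) (w1 w2 : ι) : IsClosed {c : ι → β | P (c w1) (c w2)} := by
  have : {c : ι → β | P (c w1) (c w2)} =
      (fun c : ι → β => (c w1, c w2)) ⁻¹' {q : β × β | P q.1 q.2} := rfl
  rw [this]
  exact (isClosed_discrete _).preimage ((continuous_apply w1).prodMk (continuous_apply w2))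

lemma similar_append (Γ : Blueprint M S) {u v : List S} (w : List S)
    (h : Γ.Similar u v) : Γ.Similar (w ++ u) (w ++ v) := by
  obtain ⟨x, y, r, r', hr, hu, hv⟩ := h
  exact ⟨w ++ x, y, r, r', hr, by rw [hu]; simp [List.append_assoc],
    by rw [hv]; simp [List.append_assoc]⟩

lemma equiv_append (Γ : Blueprint M S) {u v : List S} (w : List S)
    (h : Γ.Equiv u v) : Γ.Equiv (w ++ u) (w ++ v) := by
  induction h with
  | rel a b hab => exact Relation.EqvGen.rel _ _ (similar_append Γ w hab)
  | refl a => exact Relation.EqvGen.refl _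
  | symm a b _ ih => exact Relation.EqvGen.symm _ _ ih
  | trans a b d _ _ ih1 ih2 => exact Relation.EqvGen.trans _ _ _ ih1 ih2

lemma shift_inFullShift (Γ : Blueprint M S) {c : List S → Option (M × A)}
    (h : Γ.InFullShift c) {w : List S} (hw : c w ≠ none) :
    Γ.InFullShift (fun u => c (w ++ u)) := by
  refine ⟨⟨⟨?_, ?_⟩, ?_⟩, ?_⟩
  · simp only [List.append_nil]
    simp [Option.map_eq_none_iff, hw]
  · intro u s
    have := h.1.1.2 (w ++ u) s
    simpa [List.append_assoc] using this
  · intro u v huv h1 h2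
    have := h.1.2 (w ++ u) (w ++ v) (equiv_append Γ w huv)
    simpa using this (by simpa using h1) (by simpa using h2)
  · intro u v huv h1 h2
    exact h.2 (w ++ u) (w ++ v) (equiv_append Γ w huv) h1 h2

lemma isClosed_inFullShift (Γ : Blueprint M S) :
    IsClosed {c : List S → Option (M × A) | Γ.InFullShift c} := by
  have heq : {c : List S → Option (M × A) | Γ.InFullShift c} =
      {c : List S → Option (M × A) | (fun a _ : Option (M × A) => a.map Prod.fst ≠ none) (c []) (c [])} ∩
      ((⋂ w : List S, ⋂ s : S, {c : List S → Option (M × A) |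
        (fun a b : Option (M × A) =>
          (a.map Prod.fst = some (Γ.init s) → ∃ m ∈ Γ.term s, b.map Prod.fst = some m) ∧
          (a.map Prod.fst ≠ some (Γ.init s) → b.map Prod.fst = none)) (c w) (c (w ++ [s]))}) ∩
      (⋂ u : List S, ⋂ v : List S, {c : List S → Option (M × A) |
        (fun a b : Option (M × A) =>
          (Γ.Equiv u v → a.map Prod.fst ≠ none → b.map Prod.fst ≠ none →
            a.map Prod.fst = b.map Prod.fst) ∧
          (Γ.Equiv u v → a ≠ none → b ≠ none → a.map Prod.snd = b.map Prod.snd)) (c u) (c v)})) := by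
    ext c
    simp only [Blueprint.InFullShift, Blueprint.IsModel, Blueprint.Consistent,
      Set.mem_inter_iff, Set.mem_iInter, Set.mem_setOf_eq]
    constructor
    · rintro ⟨⟨⟨h0, h1⟩, h2⟩, h3⟩
      exact ⟨h0, fun w s => h1 w s, fun u v => ⟨fun he => h2 u v he, fun he => h3 u v he⟩⟩
    · rintro ⟨h0, h1, h2⟩
      exact ⟨⟨⟨h0, fun w s => h1 w s⟩, fun u v he => (h2 u v).1 he⟩,
        fun u v he => (h2 u v).2 he⟩
  rw [heq]
  refine IsClosed.inter ?_ (IsClosed.inter ?_ ?_)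
  · exact closed_pair (fun a _ : Option (M × A) => a.map Prod.fst ≠ none) ([] : List S) []
  · exact isClosed_iInter fun w => isClosed_iInter fun s =>
      closed_pair (fun a b : Option (M × A) =>
        (a.map Prod.fst = some (Γ.init s) → ∃ m ∈ Γ.term s, b.map Prod.fst = some m) ∧
        (a.map Prod.fst ≠ some (Γ.init s) → b.map Prod.fst = none)) w (w ++ [s])
  · exact isClosed_iInter fun u => isClosed_iInter fun v =>
      closed_pair (fun a b : Option (M × A) =>
        (Γ.Equiv u v → a.map Prod.fst ≠ none → b.map Prod.fst ≠ none →
          a.map Prod.fst = b.map Prod.fst) ∧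
        (Γ.Equiv u v → a ≠ none → b ≠ none → a.map Prod.snd = b.map Prod.snd)) u v

lemma isClosed_avoids (F : Set (List S → Option (M × A)))
    (hF : ∀ p ∈ F, {u : List S | p u ≠ none}.Finite) :
    IsClosed {c : List S → Option (M × A) | AvoidsPatterns F c} := by
  have heq : {c : List S → Option (M × A) | AvoidsPatterns F c} =
      ⋂ p ∈ F, ⋂ w : List S,
        ({c : List S → Option (M × A) | c w = none} ∪
          (⋂ u ∈ {u : List S | p u ≠ none},
            {c : List S → Option (M × A) | c (w ++ u) = p u})ᶜ) := by
    ext c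
    simp only [AvoidsPatterns, Set.mem_iInter, Set.mem_union, Set.mem_setOf_eq,
      Set.mem_compl_iff, Set.mem_iInter]
    constructor
    · intro h p hp w
      by_cases hw : c w = none
      · exact Or.inl hw
      · refine Or.inr ?_
        obtain ⟨u, hu1, hu2⟩ := h p hp w hw
        intro hall
        exact hu2 (hall u hu1)
    · intro h p hp w hw
      rcases h p hp w with h' | h'
      · exact absurd h' hw
      · push_neg at h'
        obtain ⟨u, hu1, hu2⟩ := h'
        exact ⟨u, hu1, hu2⟩
  rw [heq]
  refine isClosed_biInter fun p hp => isClosed_iInter fun w => IsClosed.union ?_ ?_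
  · exact closed_pair (fun a _ => a = none) w w
  · refine IsOpen.isClosed_compl ?_
    refine Set.Finite.isOpen_biInter (hF p hp) (fun u _ => ?_)
    have : {c : List S → Option (M × A) | c (w ++ u) = p u} =
        (fun c : List S → Option (M × A) => c (w ++ u)) ⁻¹' {p u} := rfl
    rw [this]
    exact (isOpen_discrete _).preimage (continuous_apply _)
end Aux

/-- A subset of the full `Γ`-shift is a `Γ`-subshift (defined by a set of finitely supported
forbidden patterns) iff it is closed in the prodiscrete topology and invariant under the
partial shift action of `S*`. -/

theorem stmt15 {M S A : Type*} [Finite M] [Finite S] [Finite A]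
    (Γ : Blueprint M S) (X : Set (List S → Option (M × A)))
    (hX : ∀ c ∈ X, Γ.InFullShift c) :
    (∃ F : Set (List S → Option (M × A)),
        (∀ p ∈ F, {u : List S | p u ≠ none}.Finite) ∧
        X = {c | Γ.InFullShift c ∧ AvoidsPatterns F c}) ↔
      (IsClosed X ∧
        ∀ c ∈ X, ∀ w : List S, c w ≠ none → (fun u => c (w ++ u)) ∈ X) := by
  constructor
  · rintro ⟨F, hFfin, rfl⟩
    constructor
    · exact (isClosed_inFullShift Γ).inter (isClosed_avoids F hFfin)
    · rintro c ⟨hc1, hc2⟩ w hw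
      refine ⟨shift_inFullShift Γ hc1 hw, ?_⟩
      intro p hp w' hw'
      obtain ⟨u, h1, h2⟩ := hc2 p hp (w ++ w') hw'
      exact ⟨u, h1, by rwa [List.append_assoc] at h2⟩
  · rintro ⟨hclosed, hinv⟩
    classical
    refine ⟨{p | {u : List S | p u ≠ none}.Finite ∧ ∀ d ∈ X, ∃ u, p u ≠ none ∧ d u ≠ p u},
      fun p hp => hp.1, ?_⟩
    ext c
    simp only [Set.mem_setOf_eq]
    constructor
    · intro hcX
      refine ⟨hX c hcX, fun p hp w hw => ?_⟩
      obtain ⟨u, h1, h2⟩ := hp.2 _ (hinv c hcX w hw)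
      exact ⟨u, h1, h2⟩
    · rintro ⟨h1, h2⟩
      by_contra hcX
      have hopen : IsOpen Xᶜ := hclosed.isOpen_compl
      rw [isOpen_pi_iff] at hopen
      obtain ⟨I, u, hIu, hsub⟩ := hopen c hcX
      set U : Set (List S) := {v | ∃ i ∈ I, v <+: i} with hU
      have hUfin : U.Finite := by
        have : U = ⋃ i ∈ I, {v | v ∈ i.inits} := by
          ext v; simp [hU, List.mem_inits]
        rw [this]
        exact I.finite_toSet.biUnion fun i _ => List.finite_toSet i.inits
      set p : List S → Option (M × A) := fun v => if v ∈ U then c v else none with hp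
      have hpfin : {v : List S | p v ≠ none}.Finite := by
        refine hUfin.subset fun v hv => ?_
        by_contra hvU
        exact hv (if_neg hvU)
      have hc0 : c [] ≠ none := fun h => h1.1.1.1 (by simp [h])
      have key : ∀ d, Γ.InFullShift d → (∀ v, p v ≠ none → d v = p v) →
          ∀ v, v ∈ U → d v = c v := by
        intro d hd hmatch v
        induction v using List.reverseRecOn with
        | nil =>
          intro h0U
          have hpnil : p [] = c [] := if_pos h0U
          rw [hmatch [] (by rw [hpnil]; exact hc0), hpnil]
        | append_singleton v' s ih =>
          intro hvU
          have hv'U : v' ∈ U := by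
            obtain ⟨i, hi, hpre⟩ := hvU
            exact ⟨i, hi, (List.prefix_append v' [s]).trans hpre⟩
          have hdv' := ih hv'U
          by_cases hcv : c (v' ++ [s]) = none
          · have hφc : ¬ ((c v').map Prod.fst = some (Γ.init s)) := by
              intro hsome
              obtain ⟨m, _, hm⟩ := (h1.1.1.2 v' s).1 hsome
              simp [hcv] at hm
            have hφd : ¬ ((d v').map Prod.fst = some (Γ.init s)) := by
              rw [hdv']; exact hφc
            have h3 := (hd.1.1.2 v' s).2 hφd
            exact (Option.map_eq_none_iff.mp h3).trans hcv.symm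
          · have hpv : p (v' ++ [s]) = c (v' ++ [s]) := if_pos hvU
            rw [hmatch _ (by rw [hpv]; exact hcv), hpv]
      have hpF : {v : List S | p v ≠ none}.Finite ∧
          ∀ d ∈ X, ∃ v, p v ≠ none ∧ d v ≠ p v := by
        refine ⟨hpfin, fun d hdX => ?_⟩
        by_contra hno
        push_neg at hno
        have hall := key d (hX d hdX) hno
        have hdpi : d ∈ (I : Set (List S)).pi u := by
          intro i hi
          rw [hall i ⟨i, hi, List.prefix_refl i⟩]
          exact (hIu i hi).2
        exact (hsub hdpi) hdX
      obtain ⟨v, hv1, hv2⟩ := h2 p hpF [] hc0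
      apply hv2
      simp only [List.nil_append]
      have hvU : v ∈ U := by
        by_contra h
        exact hv1 (if_neg h)
      exact (if_pos hvU).symm
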